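/- arXiv:2605.19596 — 3 statements merged into one kernel-verified Lean document; each statement's English description precedes it below -/
import Mathlib

section
/- Let q be a prime power, let e divide q−1, and suppose A = C_0^e is a proper (q,k,λ,μ) partial difference set in the additive group of F_q with λ ≠ μ. Then for every i with 0 < i < e, the class C_i^e is NOT a skew PDS corresponding to A; that is, the multiset equality Δ(C_i^e) = λ·A^* + μ·(F_q^*∖A) fails for all 0 < i < e. -/
open Finset

section Defs

variable {G : Type*} [AddCommGroup G] [Fintype G] [DecidableEq G]

/-- The multiset `Δ(D)` of internal differences `x - y` (for `x ≠ y` in `D`). -/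
def intDiff (D : Finset G) : Multiset G :=
  ((D ×ˢ D).filter (fun p => p.1 ≠ p.2)).val.map (fun p => p.1 - p.2)

/-- The multiset `Δ(D, E)` of external differences `x - y` for `x ∈ D`, `y ∈ E`. -/
def extDiff (D E : Finset G) : Multiset G :=
  (D ×ˢ E).val.map (fun p => p.1 - p.2)

/-- The finset `G^*` of nonzero elements of `G`. -/
def Gstar (G : Type*) [AddCommGroup G] [Fintype G] [DecidableEq G] : Finset G :=
  Finset.univ.erase 0

/-- `A` is a `(v, k, lam, mu)` partial difference set in `G`:
`Δ(A) = lam • A^* + mu • (G^* \ A)`. -/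
def IsPDS (A : Finset G) (v k lam mu : ℕ) : Prop :=
  Fintype.card G = v ∧ A.card = k ∧
    intDiff A = lam • (A.erase 0).val + mu • (Gstar G \ A).val

/-- `D` is a `(v, k, lam, mu)` skew partial difference set corresponding to the
`(v, k, lam, mu)`-PDS `A`: `Δ(D) = lam • A^* + mu • (G^* \ A)`. -/
def IsSkewPDS (D A : Finset G) (v k lam mu : ℕ) : Prop :=
  IsPDS A v k lam mu ∧ D.card = k ∧
    intDiff D = lam • (A.erase 0).val + mu • (Gstar G \ A).val

/-- `D` is an `(n, m, k₁, …, k_m; lam, mu)` disjoint partial difference family relative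
to `T`: the `D i` are pairwise disjoint subsets of `G^*` of sizes `k i`, and
`∑ i, Δ(D i) = lam • T + mu • (G^* \ T)`. -/
def IsDPDF {ι : Type*} [Fintype ι] (D : ι → Finset G) (n m : ℕ) (k : ι → ℕ)
    (T : Finset G) (lam mu : ℕ) : Prop :=
  Fintype.card G = n ∧ Fintype.card ι = m ∧
    (∀ i, (0 : G) ∉ D i) ∧ (∀ i, (D i).card = k i) ∧
    (Pairwise (fun i j => Disjoint (D i) (D j))) ∧
    ∑ i, intDiff (D i) = lam • T.val + mu • (Gstar G \ T).val

/-- `D` is an `(n, m, k₁, …, k_m; lam, mu)` external partial difference family relative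
to `T`: the `D i` are pairwise disjoint subsets of `G^*` of sizes `k i`, and
`∑_{i ≠ j}, Δ(D i, D j) = lam • T + mu • (G^* \ T)`. -/
def IsEPDF {ι : Type*} [Fintype ι] [DecidableEq ι] (D : ι → Finset G) (n m : ℕ)
    (k : ι → ℕ) (T : Finset G) (lam mu : ℕ) : Prop :=
  Fintype.card G = n ∧ Fintype.card ι = m ∧
    (∀ i, (0 : G) ∉ D i) ∧ (∀ i, (D i).card = k i) ∧
    (Pairwise (fun i j => Disjoint (D i) (D j))) ∧
    ∑ i, ∑ j ∈ Finset.univ.erase i, extDiff (D i) (D j)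
      = lam • T.val + mu • (Gstar G \ T).val

/-- `D` is an `(n, m, k₁, …, k_m, lam)` disjoint difference family:
`∑ i, Δ(D i) = lam • G^*`. -/
def IsDDF {ι : Type*} [Fintype ι] (D : ι → Finset G) (n m : ℕ) (k : ι → ℕ)
    (lam : ℕ) : Prop :=
  Fintype.card G = n ∧ Fintype.card ι = m ∧
    (∀ i, (0 : G) ∉ D i) ∧ (∀ i, (D i).card = k i) ∧
    (Pairwise (fun i j => Disjoint (D i) (D j))) ∧
    ∑ i, intDiff (D i) = lam • (Gstar G).val

/-- `D` is an `(n, m, k₁, …, k_m, lam)` external difference family: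
`∑_{i ≠ j}, Δ(D i, D j) = lam • G^*`. -/
def IsEDF {ι : Type*} [Fintype ι] [DecidableEq ι] (D : ι → Finset G) (n m : ℕ)
    (k : ι → ℕ) (lam : ℕ) : Prop :=
  Fintype.card G = n ∧ Fintype.card ι = m ∧
    (∀ i, (0 : G) ∉ D i) ∧ (∀ i, (D i).card = k i) ∧
    (Pairwise (fun i j => Disjoint (D i) (D j))) ∧
    ∑ i, ∑ j ∈ Finset.univ.erase i, extDiff (D i) (D j) = lam • (Gstar G).val

end Defs

section Cyclotomy

variable {F : Type*} [Field F] [Fintype F] [DecidableEq F]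

/-- The cyclotomic class `C_i^e = α^i ⟨α^e⟩` of order `e` in the finite field `F`,
with respect to the primitive element `α`.  (Since `α` has multiplicative order at most
`|F| - 1`, letting `j` range over `0, …, |F| - 1` captures the whole class.) -/
def cycClass (α : F) (e i : ℕ) : Finset F :=
  (Finset.range (Fintype.card F)).image (fun j => α ^ (e * j + i))

/-- `α` is a primitive element of the finite field `F`: every nonzero element of `F`
is a power of `α`. -/
def IsPrimitiveElt (α : F) : Prop :=
  ∀ x : F, x ≠ 0 → ∃ n : ℕ, α ^ n = x

end Cyclotomy

lemma prodMap_sq {α β : Type*} (g : α ↪ β) (s : Finset α) :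
    (s.map g) ×ˢ (s.map g) = (s ×ˢ s).map (g.prodMap g) := by
  ext ⟨a, b⟩
  simp [Finset.mem_product, Function.Embedding.prodMap, Prod.ext_iff]
  aesop

lemma intDiff_mul {F : Type*} [Field F] [Fintype F] [DecidableEq F] (c : F) (hc : c ≠ 0)
    (D : Finset F) :
    intDiff (D.image (c * ·)) = (intDiff D).map (c * ·) := by
  have hinj : Function.Injective (c * ·) := mul_right_injective₀ hc
  have him : D.image (c * ·) = D.map ⟨(c * ·), hinj⟩ := (Finset.map_eq_image ⟨(c * ·), hinj⟩ D).symm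
  rw [him]
  unfold intDiff
  rw [prodMap_sq, Finset.filter_map, Finset.map_val, Multiset.map_map, Multiset.map_map]
  congr 1
  · funext ⟨a, b⟩
    simp [Function.Embedding.prodMap, mul_sub]
  · congr 1
    apply Finset.filter_congr
    intro ⟨a, b⟩ _
    simp only [Function.Embedding.prodMap, Function.comp_apply,
      Function.Embedding.coeFn_mk, ne_eq, Prod.map_fst, Prod.map_snd, not_iff_not]
    exact hinj.eq_iff


/-- If `A = C_0^e` is a proper `(q, k, lam, mu)`-PDS in `F_q` with
`lam ≠ mu`, then no `C_i^e` with `0 < i < e` has the internal difference profile of `A`;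
i.e. the multiset equality `Δ(C_i^e) = lam • A^* + mu • (F_q^* \ A)` fails. -/
theorem stmt_0 {F : Type*} [Field F] [Fintype F] [DecidableEq F]
    (q : ℕ) (hq : Fintype.card F = q)
    (α : F) (hα : IsPrimitiveElt α)
    (e : ℕ) (he : e ∣ q - 1)
    (k lam mu : ℕ)
    (hA : IsPDS (cycClass α e 0) q k lam mu)
    (hproper : lam ≠ mu) :
    ∀ i : ℕ, 0 < i → i < e →
      intDiff (cycClass α e i) ≠
        lam • ((cycClass α e 0).erase 0).val +
          mu • (Gstar F \ cycClass α e 0).val := by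
  intro i hi0 hie h
  -- basic facts
  have hq2 : 2 ≤ Fintype.card F := Fintype.one_lt_card
  have he2 : 2 ≤ e := by omega
  have hq1pos : 0 < q - 1 := by omega
  have heq1 : e ≤ q - 1 := Nat.le_of_dvd hq1pos he
  have hq3 : 3 ≤ q := by omega
  -- α ≠ 0
  have hα0 : α ≠ 0 := by
    intro h0
    have hcard : 2 < (Finset.univ : Finset F).card := by
      rw [Finset.card_univ, hq]; exact hq3
    obtain ⟨x, hx01⟩ : ((Finset.univ : Finset F) \ {0, 1}).Nonempty := by
      rw [← Finset.card_pos, Finset.card_sdiff_of_subset (Finset.subset_univ _)]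
      have h2 : ({0,1} : Finset F).card ≤ 2 := Finset.card_insert_le _ _ |>.trans (by simp)
      omega
    rw [Finset.mem_sdiff, Finset.mem_insert, Finset.mem_singleton] at hx01
    push_neg at hx01
    obtain ⟨-, hx0, hx1⟩ := hx01
    obtain ⟨n, hn⟩ := hα x hx0
    rw [h0] at hn
    rcases Nat.eq_zero_or_pos n with rfl | hn0
    · simp at hn; exact hx1 hn.symm
    · rw [zero_pow (by omega)] at hn; exact hx0 hn.symm
  -- the unit u and its order
  set u : Fˣ := Units.mk0 α hα0 with hu
  have hord : orderOf u = q - 1 := by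
    have : ∀ x : Fˣ, x ∈ Subgroup.zpowers u := by
      intro x
      obtain ⟨n, hn⟩ := hα x.val x.ne_zero
      refine ⟨(n : ℤ), Units.ext ?_⟩
      show ((u ^ (n : ℤ) : Fˣ) : F) = x
      rw [zpow_natCast]
      simpa [hu] using hn
    rw [orderOf_eq_card_of_forall_mem_zpowers this, Nat.card_eq_fintype_card,
      Fintype.card_units, hq]
  -- 1 ∈ A
  have h1A : (1 : F) ∈ cycClass α e 0 := by
    refine Finset.mem_image.2 ⟨0, ?_, by simp⟩
    simp [Fintype.card_pos]
  -- α^i ∉ A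
  have hiA : α ^ i ∉ cycClass α e 0 := by
    intro hmem
    obtain ⟨j, -, hj⟩ := Finset.mem_image.1 hmem
    rw [Nat.add_zero] at hj
    have huij : u ^ (e * j) = u ^ i := by
      ext; simpa [hu] using hj
    have hmod : e * j ≡ i [MOD q - 1] := by
      rwa [pow_eq_pow_iff_modEq, hord] at huij
    have hmode : e * j ≡ i [MOD e] := hmod.of_dvd he
    have : (0 : ℕ) ≡ i [MOD e] := by
      calc (0 : ℕ) ≡ e * j [MOD e] :=
            (Nat.modEq_zero_iff_dvd.2 ⟨j, rfl⟩).symm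
        _ ≡ i [MOD e] := hmode
    have hedvd : e ∣ i := Nat.modEq_zero_iff_dvd.1 this.symm
    exact absurd (Nat.le_of_dvd hi0 hedvd) (by omega)
  -- C_i = (α^i) • A
  have hCi : cycClass α e i = (cycClass α e 0).image ((α ^ i) * ·) := by
    unfold cycClass
    rw [Finset.image_image]
    apply Finset.image_congr
    intro j _
    simp only [Function.comp_apply]
    rw [Nat.add_zero, ← pow_add, Nat.add_comm]
  have hci0 : (α : F) ^ i ≠ 0 := pow_ne_zero _ hα0
  -- Δ(C_i) = map (α^i * ·) Δ(A)
  have hmap : intDiff (cycClass α e i) = (intDiff (cycClass α e 0)).map ((α ^ i) * ·) := by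
    rw [hCi]; exact intDiff_mul _ hci0 _
  set M : Multiset F :=
    lam • ((cycClass α e 0).erase 0).val + mu • (Gstar F \ cycClass α e 0).val with hM
  have hAM : intDiff (cycClass α e 0) = M := hA.2.2
  have hMM : M.map ((α ^ i) * ·) = M := by
    rw [← hAM, ← hmap, h]
    exact hAM.symm
  have hinj : Function.Injective ((α ^ i) * ·) := mul_right_injective₀ hci0
  -- count 1 in M is lam
  have hc1 : M.count 1 = lam := by
    rw [hM, Multiset.count_add, Multiset.count_nsmul, Multiset.count_nsmul,
      Multiset.count_eq_one_of_mem ((cycClass α e 0).erase 0).nodup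
        (Finset.mem_erase.2 ⟨one_ne_zero, h1A⟩),
      Multiset.count_eq_zero_of_notMem (by
        intro hmem
        exact (Finset.mem_sdiff.1 hmem).2 h1A)]
    ring
  -- count α^i in M is mu
  have hcai : M.count (α ^ i) = mu := by
    rw [hM, Multiset.count_add, Multiset.count_nsmul, Multiset.count_nsmul,
      Multiset.count_eq_zero_of_notMem (fun hmem => hiA (Finset.erase_subset _ _ hmem)),
      Multiset.count_eq_one_of_mem (Gstar F \ cycClass α e 0).nodup
        (Finset.mem_sdiff.2 ⟨Finset.mem_erase.2 ⟨hci0, Finset.mem_univ _⟩, hiA⟩)]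
    ring
  -- conclude
  have : M.count (α ^ i) = M.count 1 := by
    conv_lhs => rw [← hMM]
    have := Multiset.count_map_eq_count' ((α ^ i) * ·) M hinj 1
    simpa using this
  rw [hcai, hc1] at this
  exact hproper this.symm
end

section
/- Let G be an abelian group of order v and let A_1,…,A_m be pairwise disjoint subsets of G^*. For each i, let D_i ⊆ G^* be a subset of size k_i satisfying the multiset equality Δ(D_i) = λ_i·A_i + μ_i·(G^*∖A_i), where λ_i − μ_i = δ is the same for all i, and suppose the D_i are pairwise disjoint. Then D = {D_1,…,D_m} is a (v,m,k_1,…,k_m; δ + Σ_{i=1}^m μ_i, Σ_{i=1}^m μ_i)-DPDF relative to T = ∪_{i=1}^m A_i; that is, Σ_{i=1}^m Δ(D_i) = (δ + Σ_i μ_i)·T + (Σ_i μ_i)·(G^*∖T) as multisets. -/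
open Finset

lemma count_fval {G : Type*} [DecidableEq G] (s : Finset G) (a : G) :
    s.val.count a = if a ∈ s then 1 else 0 := by
  rw [Multiset.count_eq_of_nodup s.nodup]; rfl

/-- Let `G` be an abelian group of order `v`, `A_1, …, A_m` pairwise
disjoint subsets of `G^*`, and for each `i` let `D_i ⊆ G^*` of size `k_i` satisfy
`Δ(D_i) = lam_i • A_i + mu_i • (G^* \ A_i)` with `lam_i - mu_i = δ` independent of `i`,
the `D_i` pairwise disjoint.  Then
`∑_i Δ(D_i) = (δ + ∑_i mu_i) • T + (∑_i mu_i) • (G^* \ T)` where `T = ∪_i A_i`;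
i.e. `{D_1, …, D_m}` is a `(v, m, k_1, …, k_m; δ + ∑ mu, ∑ mu)`-DPDF relative to `T`. -/
theorem stmt_8 {G : Type*} [AddCommGroup G] [Fintype G] [DecidableEq G]
    (v m : ℕ) (hv : Fintype.card G = v)
    (A D : Fin m → Finset G) (k lam mu : Fin m → ℕ) (δ : ℤ)
    (hA0 : ∀ i, (0 : G) ∉ A i)
    (hAdisj : Pairwise (fun i j => Disjoint (A i) (A j)))
    (hD0 : ∀ i, (0 : G) ∉ D i)
    (hDk : ∀ i, (D i).card = k i)
    (hDdisj : Pairwise (fun i j => Disjoint (D i) (D j)))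
    (hdiff : ∀ i, intDiff (D i) = lam i • (A i).val + mu i • (Gstar G \ A i).val)
    (hδ : ∀ i, (lam i : ℤ) - (mu i : ℤ) = δ) :
    ∑ i, intDiff (D i) =
      (δ + ∑ i, (mu i : ℤ)).toNat • (Finset.univ.biUnion A).val +
        (∑ i, mu i) • (Gstar G \ Finset.univ.biUnion A).val := by
  classical
  refine Multiset.ext.mpr fun a => ?_
  simp only [hdiff, Multiset.count_sum', Multiset.count_add, Multiset.count_nsmul,
    count_fval]
  by_cases haG : a ∈ Gstar G
  · by_cases haT : a ∈ Finset.univ.biUnion A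
    · obtain ⟨j, -, hj⟩ := Finset.mem_biUnion.mp haT
      have hnot : ∀ i, i ≠ j → a ∉ A i := fun i hij h =>
        (Finset.disjoint_left.mp (hAdisj hij)) h hj
      rw [if_pos haT, ← Finset.add_sum_erase _ _ (Finset.mem_univ j)]
      have h1 : ∀ i ∈ Finset.univ.erase j,
          (lam i * (if a ∈ A i then 1 else 0) + mu i * (if a ∈ Gstar G \ A i then 1 else 0))
          = mu i := by
        intro i hi
        have hij := Finset.ne_of_mem_erase hi
        rw [if_neg (hnot i hij), if_pos (Finset.mem_sdiff.mpr ⟨haG, hnot i hij⟩)]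
        ring
      rw [Finset.sum_congr rfl h1, if_pos hj,
        if_neg (by simp [Finset.mem_sdiff, haT] : ¬ a ∈ Gstar G \ Finset.univ.biUnion A)]
      have hsum : (∑ i, (mu i : ℤ)) = mu j + ∑ i ∈ Finset.univ.erase j, (mu i : ℤ) :=
        (Finset.add_sum_erase _ _ (Finset.mem_univ j)).symm
      have hδj := hδ j
      have : (δ + ∑ i, (mu i : ℤ)) = (lam j : ℤ) + ∑ i ∈ Finset.univ.erase j, (mu i : ℤ) := by
        rw [hsum]; linarith
      have h2 : (δ + ∑ i, (mu i : ℤ)).toNat = lam j + ∑ i ∈ Finset.univ.erase j, mu i := by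
        rw [this, ← Nat.cast_sum, ← Nat.cast_add, Int.toNat_natCast]
      rw [h2]; simp [Finset.mem_sdiff, hj]
    · have hnot : ∀ i, a ∉ A i := fun i h =>
        haT (Finset.mem_biUnion.mpr ⟨i, Finset.mem_univ i, h⟩)
      rw [if_neg haT, if_pos (Finset.mem_sdiff.mpr ⟨haG, haT⟩)]
      simp [hnot, Finset.mem_sdiff, haG]
  · have hnot : ∀ i, a ∉ A i := by
      intro i h
      exact haG (Finset.mem_erase.mpr ⟨fun h0 => hA0 i (h0 ▸ h), Finset.mem_univ a⟩)
    have haT : a ∉ Finset.univ.biUnion A := fun h => by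
      obtain ⟨i, -, hi⟩ := Finset.mem_biUnion.mp h; exact hnot i hi
    rw [if_neg haT, if_neg (by simp [Finset.mem_sdiff, haG])]
    simp [hnot, Finset.mem_sdiff, haG]
end

section
/- Let q ≡ 1 (mod 8) be a prime power, let γ ∈ C_2^4, let R ⊆ C_0^4 be a set of coset representatives for the quotient C_0^4/{1,−1} (so |R| = (q−1)/8 and C_0^4 is the disjoint union of the pairs {i,−i}, i ∈ R), and for i ∈ R set D_i = {i, −i, γi, −γi}. Suppose that one of 1−γ and 1+γ lies in C_0^4 while the other lies in C_2^4. Then the sets D_i are pairwise disjoint with ∪_{i∈R} D_i = C_0^2, the family D = {D_i : i ∈ R} is a (q,(q−1)/8,4;3,0)-DPDF relative to C_0^2 (i.e., Σ_{i∈R} Δ(D_i) = 3·C_0^2 as multisets) and a (q,(q−1)/8,4;(q−17)/4,(q−1)/4)-EPDF relative to C_0^2; since C_0^2 = ∪_{i∈R} D_i, these are a standard DPDF and EPDF partitioning C_0^2. -/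
open Finset

set_option linter.unusedSectionVars false
set_option linter.unusedVariables false
set_option maxHeartbeats 1000000

section AuxCount
variable {G : Type*} [AddCommGroup G] [Fintype G] [DecidableEq G]



lemma count_intDiff (D : Finset G) (d : G) :
    (intDiff D).count d = ∑ x ∈ D, ∑ y ∈ D, if x ≠ y ∧ d = x - y then 1 else 0 := by
  rw [intDiff, Multiset.count_map, ← Finset.filter_val, Finset.filter_filter]
  rw [show Multiset.card (Finset.filter (fun a => a.1 ≠ a.2 ∧ d = a.1 - a.2) (D ×ˢ D)).val
      = (Finset.filter (fun a => a.1 ≠ a.2 ∧ d = a.1 - a.2) (D ×ˢ D)).card from rfl]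
  rw [Finset.card_filter, Finset.sum_product]

lemma count_extDiff (D E : Finset G) (d : G) :
    (extDiff D E).count d = ∑ x ∈ D, ∑ y ∈ E, if d = x - y then 1 else 0 := by
  rw [extDiff, Multiset.count_map, ← Finset.filter_val]
  rw [show Multiset.card (Finset.filter (fun a => d = a.1 - a.2) (D ×ˢ E)).val
      = (Finset.filter (fun a => d = a.1 - a.2) (D ×ˢ E)).card from rfl]
  rw [Finset.card_filter, Finset.sum_product]

lemma count_finset_val (s : Finset G) (x : G) :
    s.val.count x = if x ∈ s then 1 else 0 := by
  split_ifs with h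
  · exact Multiset.count_eq_one_of_mem s.nodup h
  · exact Multiset.count_eq_zero_of_notMem h




lemma multiset_map_sum {ι : Type*} (f : G → G) (s : Finset ι) (g : ι → Multiset G) :
    Multiset.map f (∑ i ∈ s, g i) = ∑ i ∈ s, Multiset.map f (g i) :=
  map_sum (Multiset.mapAddMonoidHom f) _ _

/-- internal differences of a 4-element set -/
lemma intDiff_quad {a b c e : G} (hab : a ≠ b) (hac : a ≠ c) (hae : a ≠ e)
    (hbc : b ≠ c) (hbe : b ≠ e) (hce : c ≠ e) :
    intDiff ({a, b, c, e} : Finset G) =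
      ({a - b, b - a, c - e, e - c, a - c, c - a, a - e, e - a, e - b, b - e, c - b, b - c} :
        Multiset G) := by
  have ha : a ∉ ({b, c, e} : Finset G) := by simp [hab, hac, hae]
  have hb : b ∉ ({c, e} : Finset G) := by simp [hbc, hbe]
  have hc : c ∉ ({e} : Finset G) := by simp [hce]
  ext d
  rw [count_intDiff]
  simp only [Finset.sum_insert ha, Finset.sum_insert hb, Finset.sum_insert hc,
    Finset.sum_singleton]
  simp only [Multiset.insert_eq_cons, Multiset.count_cons, Multiset.count_singleton]
  simp only [ne_eq, hab, hac, hae, hbc, hbe, hce, Ne.symm hab, Ne.symm hac, Ne.symm hae,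
    Ne.symm hbc, Ne.symm hbe, Ne.symm hce, not_false_eq_true, true_and, not_true_eq_false,
    false_and, if_false]
  ring

variable {ι : Type*} [Fintype ι] [DecidableEq ι]

variable {ι : Type*} [Fintype ι] [DecidableEq ι]

lemma intDiff_biUnion (D : ι → Finset G)
    (hdisj : Pairwise (fun i j => Disjoint (D i) (D j))) :
    intDiff (Finset.univ.biUnion D) =
      ∑ i, intDiff (D i) + ∑ i, ∑ j ∈ Finset.univ.erase i, extDiff (D i) (D j) := by
  have hpd : Set.PairwiseDisjoint (↑(Finset.univ : Finset ι) : Set ι) D := by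
    intro i _ j _ hij
    exact hdisj hij
  ext d
  rw [Multiset.count_add, Multiset.count_sum', Multiset.count_sum', count_intDiff]
  rw [Finset.sum_biUnion hpd]
  have hswap : ∀ i, ∑ x ∈ D i, ∑ y ∈ Finset.univ.biUnion D, (if x ≠ y ∧ d = x - y then 1 else 0)
      = ∑ j, ∑ x ∈ D i, ∑ y ∈ D j, (if x ≠ y ∧ d = x - y then 1 else 0) := by
    intro i
    rw [Finset.sum_congr rfl (fun x (_ : x ∈ D i) => Finset.sum_biUnion hpd
      (f := fun y => if x ≠ y ∧ d = x - y then 1 else 0))]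
    exact Finset.sum_comm
  rw [Finset.sum_congr rfl (fun i _ => hswap i)]
  have hterm : ∀ i : ι, ∑ j, ∑ x ∈ D i, ∑ y ∈ D j, (if x ≠ y ∧ d = x - y then 1 else 0)
      = (intDiff (D i)).count d + ∑ j ∈ Finset.univ.erase i, (extDiff (D i) (D j)).count d := by
    intro i
    rw [← Finset.add_sum_erase _ _ (Finset.mem_univ i), count_intDiff]
    congr 1
    refine Finset.sum_congr rfl (fun j hj => ?_)
    have hij : i ≠ j := (Finset.mem_erase.1 hj).1.symm
    rw [count_extDiff]
    refine Finset.sum_congr rfl (fun x hx => Finset.sum_congr rfl (fun y hy => ?_))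
    have hxy : x ≠ y := by
      intro h
      exact (Finset.disjoint_left.1 (hdisj hij) hx) (h ▸ hy)
    simp [hxy]
  rw [Finset.sum_congr rfl (fun i _ => hterm i), Finset.sum_add_distrib]
  simp [Multiset.count_sum']

end AuxCount

section AuxCyc
variable {F : Type*} [Field F] [Fintype F] [DecidableEq F] {α : F}


lemma chi_sum_shift (hchar2 : ringChar F ≠ 2) {d : F} (hd : d ≠ 0) :
    ∑ y : F, quadraticChar F y * quadraticChar F (y + d) = -1 := by
  rw [← Finset.add_sum_erase _ _ (Finset.mem_univ (0 : F))]
  rw [quadraticChar_zero, zero_mul, zero_add]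
  have hstep : ∀ y ∈ Finset.univ.erase (0 : F),
      quadraticChar F y * quadraticChar F (y + d) = quadraticChar F (1 + d * y⁻¹) := by
    intro y hy
    have hy0 : y ≠ 0 := (Finset.mem_erase.1 hy).1
    have h1 : y + d = y * (1 + d * y⁻¹) := by field_simp
    rw [h1, map_mul, ← mul_assoc, ← pow_two, quadraticChar_sq_one hy0, one_mul]
  rw [Finset.sum_congr rfl hstep]
  rw [show ∑ y ∈ Finset.univ.erase (0 : F), quadraticChar F (1 + d * y⁻¹)
      = ∑ z ∈ Finset.univ.erase (1 : F), quadraticChar F z from ?_]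
  · rw [Finset.sum_erase_eq_sub (Finset.mem_univ (1 : F)), quadraticChar_sum_zero hchar2,
      map_one]
    ring
  · refine Finset.sum_nbij' (fun y => 1 + d * y⁻¹) (fun z => d * (z - 1)⁻¹) ?_ ?_ ?_ ?_ ?_
    · intro a ha
      have ha0 : a ≠ 0 := (Finset.mem_erase.1 ha).1
      refine Finset.mem_erase.2 ⟨?_, Finset.mem_univ _⟩
      intro h
      have : d * a⁻¹ = 0 := by linear_combination h
      rcases mul_eq_zero.1 this with h' | h'
      · exact hd h'
      · exact ha0 (inv_eq_zero.1 h')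
    · intro z hz
      have hz1 : z ≠ 1 := (Finset.mem_erase.1 hz).1
      refine Finset.mem_erase.2 ⟨?_, Finset.mem_univ _⟩
      intro h
      rcases mul_eq_zero.1 h with h' | h'
      · exact hd h'
      · exact sub_ne_zero.2 hz1 (inv_eq_zero.1 h')
    · intro a ha
      have ha0 : a ≠ 0 := (Finset.mem_erase.1 ha).1
      field_simp
      rw [show a + d - a = d by ring]; exact div_self hd
    · intro z hz
      have hz1 : z - 1 ≠ 0 := sub_ne_zero.2 (Finset.mem_erase.1 hz).1
      field_simp
      ring
    · intro a ha
      rfl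

lemma paley_count (hchar2 : ringChar F ≠ 2) (hq4 : Fintype.card F % 4 = 1)
    {d : F} (hd : d ≠ 0) :
    (4 : ℤ) * ((Finset.univ.filter (fun y : F =>
        (y ≠ 0 ∧ IsSquare y) ∧ (y + d ≠ 0 ∧ IsSquare (y + d)))).card)
      = (Fintype.card F : ℤ) - 3 - 2 * quadraticChar F d := by
  set χ := quadraticChar F with hχ
  set f : F → ℤ := fun y => (1 + χ y) * (1 + χ (y + d)) with hf
  have hsum1 : ∑ y : F, f y = (Fintype.card F : ℤ) - 1 := by
    have e1 : ∀ y ∈ Finset.univ, f y = 1 + (χ y + (χ (y + d) + χ y * χ (y + d))) :=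
      fun y _ => by rw [hf]; ring
    rw [Finset.sum_congr rfl e1, Finset.sum_add_distrib, Finset.sum_add_distrib,
      Finset.sum_add_distrib, Finset.sum_const, quadraticChar_sum_zero hchar2,
      chi_sum_shift hchar2 hd,
      show ∑ y : F, χ (y + d) = ∑ y : F, χ y from
        Fintype.sum_equiv (Equiv.addRight d) _ _ (fun y => rfl),
      quadraticChar_sum_zero hchar2, Finset.card_univ]
    push_cast
    ring
  have hmd : (-d : F) ≠ 0 := neg_ne_zero.2 hd
  have hmem : (-d : F) ∈ Finset.univ.erase (0 : F) :=
    Finset.mem_erase.2 ⟨hmd, Finset.mem_univ _⟩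
  have hsplit : ∑ y : F, f y = f 0 + (f (-d) +
      ∑ y ∈ (Finset.univ.erase (0 : F)).erase (-d), f y) := by
    rw [Finset.add_sum_erase _ f hmem, Finset.add_sum_erase _ f (Finset.mem_univ (0:F))]
  have hchineg : χ (-d) = χ d := by
    rw [show (-d : F) = -1 * d by ring, hχ, map_mul]
    have h1 : quadraticChar F (-1 : F) = 1 :=
      (quadraticChar_one_iff_isSquare (by norm_num : (-1 : F) ≠ 0)).2
        (FiniteField.isSquare_neg_one_iff.2 (by omega))
    rw [h1, one_mul]
  have hf0 : f 0 = 1 + χ d := by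
    rw [hf]
    simp [hχ, quadraticChar_zero]
  have hfmd : f (-d) = 1 + χ d := by
    rw [hf]
    simp only [neg_add_cancel, hχ, quadraticChar_zero, add_zero, mul_one, hchineg]
    exact congrArg (1 + ·) hchineg
  have hrest : ∀ y ∈ (Finset.univ.erase (0 : F)).erase (-d),
      f y = if (y ≠ 0 ∧ IsSquare y) ∧ (y + d ≠ 0 ∧ IsSquare (y + d)) then 4 else 0 := by
    intro y hy
    have hy1 := Finset.mem_erase.1 hy
    have hy0 : y ≠ 0 := (Finset.mem_erase.1 hy1.2).1
    have hyd : y + d ≠ 0 := fun h => hy1.1 (by linear_combination h)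
    have hs1 : χ y = 1 ↔ IsSquare y := quadraticChar_one_iff_isSquare hy0
    have hs2 : χ (y + d) = 1 ↔ IsSquare (y + d) := quadraticChar_one_iff_isSquare hyd
    rcases quadraticChar_dichotomy hy0 with h1 | h1 <;>
      rcases quadraticChar_dichotomy hyd with h2 | h2 <;> rw [← hχ] at h1 h2
    · rw [if_pos ⟨⟨hy0, hs1.1 h1⟩, ⟨hyd, hs2.1 h2⟩⟩]
      simp only [hf, h1, h2]
      norm_num
    · rw [if_neg (fun hc => by rw [hs2.2 hc.2.2] at h2; norm_num at h2)]
      simp only [hf, h1, h2]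
      norm_num
    · rw [if_neg (fun hc => by rw [hs1.2 hc.1.2] at h1; norm_num at h1)]
      simp only [hf, h1]
      norm_num
    · rw [if_neg (fun hc => by rw [hs1.2 hc.1.2] at h1; norm_num at h1)]
      simp only [hf, h1]
      norm_num
  have hfil : ((Finset.univ.erase (0 : F)).erase (-d)).filter (fun y =>
      (y ≠ 0 ∧ IsSquare y) ∧ (y + d ≠ 0 ∧ IsSquare (y + d)))
      = Finset.univ.filter (fun y =>
      (y ≠ 0 ∧ IsSquare y) ∧ (y + d ≠ 0 ∧ IsSquare (y + d))) := by
    ext y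
    simp only [Finset.mem_filter, Finset.mem_erase, Finset.mem_univ, true_and, and_true]
    constructor
    · tauto
    · intro hc
      refine ⟨⟨fun h => hc.2.1 (by rw [h]; ring), hc.1.1⟩, hc⟩
  have hsumE : ∑ y ∈ (Finset.univ.erase (0 : F)).erase (-d), f y
      = 4 * ((Finset.univ.filter (fun y : F =>
        (y ≠ 0 ∧ IsSquare y) ∧ (y + d ≠ 0 ∧ IsSquare (y + d)))).card : ℤ) := by
    rw [Finset.sum_congr rfl hrest, ← Finset.sum_filter, hfil, Finset.sum_const,
      nsmul_eq_mul]
    ring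
  rw [hsplit, hf0, hfmd, hsumE] at hsum1
  linarith



lemma prim_orderOf (hcard : 1 < Fintype.card F) (hα0 : α ≠ 0) (hα : IsPrimitiveElt α) :
    orderOf α = Fintype.card F - 1 := by
  have h : ∀ v : Fˣ, v ∈ Subgroup.zpowers (Units.mk0 α hα0) := by
    intro v
    obtain ⟨n, hn⟩ := hα v (Units.ne_zero v)
    refine Subgroup.mem_zpowers_iff.2 ⟨(n : ℤ), ?_⟩
    rw [zpow_natCast]
    exact Units.ext (by rw [Units.val_pow_eq_pow_val]; exact hn)
  have h2 := orderOf_eq_card_of_forall_mem_zpowers h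
  rw [Nat.card_eq_fintype_card, Fintype.card_units] at h2
  rw [← h2, ← orderOf_units]
  rfl

lemma cyc_ne_zero (hα0 : α ≠ 0) {e i : ℕ} {x : F} (hx : x ∈ cycClass α e i) : x ≠ 0 := by
  rw [cycClass, Finset.mem_image] at hx
  obtain ⟨j, -, rfl⟩ := hx
  exact pow_ne_zero _ hα0

lemma pow_eq_pow_iff_mod (hα0 : α ≠ 0) {a b : ℕ} :
    α ^ a = α ^ b ↔ a ≡ b [MOD orderOf α] := by
  have hcoe : ∀ n : ℕ, ((Units.mk0 α hα0 ^ n : Fˣ) : F) = α ^ n := fun n => by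
    rw [Units.val_pow_eq_pow_val]; rfl
  have hord : orderOf (Units.mk0 α hα0) = orderOf α := by
    rw [← orderOf_units]; rfl
  constructor
  · intro h
    have h2 : Units.mk0 α hα0 ^ a = Units.mk0 α hα0 ^ b :=
      Units.ext (by rw [hcoe, hcoe, h])
    have := pow_eq_pow_iff_modEq.mp h2
    rwa [hord] at this
  · intro h
    have h2 : Units.mk0 α hα0 ^ a = Units.mk0 α hα0 ^ b :=
      pow_eq_pow_iff_modEq.mpr (by rwa [hord])
    rw [← hcoe, ← hcoe, h2]

lemma mem_cycClass_iff (hcard : 1 < Fintype.card F) (hα0 : α ≠ 0)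
    (hord : orderOf α = Fintype.card F - 1) {e i : ℕ}
    (he : e ∣ Fintype.card F - 1) (hi : i < e) (x : F) :
    x ∈ cycClass α e i ↔ ∃ n : ℕ, α ^ n = x ∧ n % e = i := by
  constructor
  · intro hx
    rw [cycClass, Finset.mem_image] at hx
    obtain ⟨j, -, rfl⟩ := hx
    exact ⟨e * j + i, rfl, by rw [Nat.mul_add_mod]; exact Nat.mod_eq_of_lt hi⟩
  · rintro ⟨n, rfl, hn⟩
    have he0 : 0 < e := lt_of_le_of_lt (Nat.zero_le i) hi
    set m := Fintype.card F - 1 with hm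
    have hm0 : 0 < m := by omega
    set n' := n % m with hn'
    have hlt : n' < m := Nat.mod_lt _ hm0
    have hmod : n' % e = i := by
      have h1 : n' ≡ n [MOD e] := Nat.ModEq.of_dvd he (Nat.mod_modEq n m)
      rw [Nat.ModEq] at h1
      rw [h1, hn]
    have hpow : α ^ n' = α ^ n := by
      rw [pow_eq_pow_iff_mod hα0, hord]
      exact (Nat.mod_modEq n m)
    have hdm := Nat.div_add_mod n' e
    refine Finset.mem_image.2 ⟨n' / e, Finset.mem_range.2 ?_, ?_⟩
    · have : n' / e ≤ n' := Nat.div_le_self _ _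
      omega
    · rw [show e * (n' / e) + i = n' by omega, hpow]

variable (hcard : 1 < Fintype.card F) (hα0 : α ≠ 0)
  (hord : orderOf α = Fintype.card F - 1) (h8 : 8 ∣ Fintype.card F - 1)
include hcard hα0 hord h8

lemma mem_c4 {i : ℕ} (hi : i < 4) (x : F) :
    x ∈ cycClass α 4 i ↔ ∃ n : ℕ, α ^ n = x ∧ n % 4 = i :=
  mem_cycClass_iff hcard hα0 hord (dvd_trans (by norm_num) h8) hi x

lemma mem_c2 (x : F) :
    x ∈ cycClass α 2 0 ↔ ∃ n : ℕ, α ^ n = x ∧ n % 2 = 0 :=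
  mem_cycClass_iff hcard hα0 hord (dvd_trans (by norm_num) h8) (by norm_num) x

lemma mul_c4 {a b : ℕ} (ha : a < 4) (hb : b < 4) {x y : F}
    (hx : x ∈ cycClass α 4 a) (hy : y ∈ cycClass α 4 b) :
    x * y ∈ cycClass α 4 ((a + b) % 4) := by
  rw [mem_c4 hcard hα0 hord h8 ha] at hx
  rw [mem_c4 hcard hα0 hord h8 hb] at hy
  obtain ⟨n, rfl, hn⟩ := hx
  obtain ⟨m, rfl, hm⟩ := hy
  rw [mem_c4 hcard hα0 hord h8 (by omega)]
  exact ⟨n + m, pow_add α n m, by omega⟩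

lemma neg_one_mem_c40 : (-1 : F) ∈ cycClass α 4 0 := by
  obtain ⟨t, ht⟩ := id h8
  set k := (Fintype.card F - 1) / 2 with hk
  have hk2 : 2 * k = Fintype.card F - 1 := by omega
  have hk4 : k % 4 = 0 := by omega
  have hsq : α ^ k * α ^ k = 1 := by
    rw [← pow_add, show k + k = Fintype.card F - 1 by omega]
    exact FiniteField.pow_card_sub_one_eq_one α hα0
  have hne : α ^ k ≠ 1 := by
    intro h
    rw [show (1 : F) = α ^ 0 from (pow_zero α).symm] at h
    have := (pow_eq_pow_iff_mod hα0).1 h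
    rw [hord, Nat.ModEq] at this
    have h1 : k % (Fintype.card F - 1) = k := Nat.mod_eq_of_lt (by omega)
    simp [h1] at this
    omega
  have : α ^ k = -1 := by
    rcases mul_self_eq_one_iff.1 hsq with h | h
    · exact absurd h hne
    · exact h
  rw [mem_c4 hcard hα0 hord h8 (by norm_num)]
  exact ⟨k, this, hk4⟩

lemma one_mem_c40 : (1 : F) ∈ cycClass α 4 0 := by
  rw [mem_c4 hcard hα0 hord h8 (by norm_num)]
  exact ⟨0, pow_zero α, rfl⟩

lemma neg_mem_c4 {a : ℕ} (ha : a < 4) {x : F} (hx : x ∈ cycClass α 4 a) :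
    -x ∈ cycClass α 4 a := by
  have := mul_c4 hcard hα0 hord h8 (by norm_num : (0:ℕ) < 4) ha
    (neg_one_mem_c40 hcard hα0 hord h8) hx
  rw [neg_one_mul, Nat.zero_add, Nat.mod_eq_of_lt ha] at this
  exact this

lemma disj_c4 {x : F} (hx : x ∈ cycClass α 4 0) (hx2 : x ∈ cycClass α 4 2) : False := by
  rw [mem_c4 hcard hα0 hord h8 (by norm_num)] at hx
  rw [mem_c4 hcard hα0 hord h8 (by norm_num)] at hx2
  obtain ⟨n, hn, hn4⟩ := hx
  obtain ⟨m, hm, hm4⟩ := hx2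
  have h := (pow_eq_pow_iff_mod hα0).1 (hn.trans hm.symm)
  rw [hord] at h
  have h4 : n ≡ m [MOD 4] := Nat.ModEq.of_dvd (dvd_trans (by norm_num) h8) h
  rw [Nat.ModEq] at h4
  omega

lemma inv_mem_c4 {a : ℕ} (ha : a < 4) {x : F} (hx : x ∈ cycClass α 4 a) :
    x⁻¹ ∈ cycClass α 4 ((4 - a) % 4) := by
  obtain ⟨t, ht⟩ := id h8
  rw [mem_c4 hcard hα0 hord h8 ha] at hx
  obtain ⟨n, rfl, hn⟩ := hx
  set m := Fintype.card F - 1 with hm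
  set n' := n % m with hn'
  have hlt : n' < m := Nat.mod_lt _ (by omega)
  have hmod : n' % 4 = a := by
    have h1 : n' ≡ n [MOD 4] := Nat.ModEq.of_dvd (dvd_trans (by norm_num) h8) (Nat.mod_modEq n m)
    rw [Nat.ModEq] at h1
    rw [h1, hn]
  have hpow : α ^ n' = α ^ n := by
    rw [pow_eq_pow_iff_mod hα0, hord]
    exact Nat.mod_modEq n m
  have hinv : (α ^ n)⁻¹ = α ^ (m - n') := by
    apply inv_eq_of_mul_eq_one_right
    rw [← hpow, ← pow_add, show n' + (m - n') = m by omega]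
    exact FiniteField.pow_card_sub_one_eq_one α hα0
  rw [hinv, mem_c4 hcard hα0 hord h8 (by omega)]
  exact ⟨m - n', rfl, by omega⟩

lemma mem_c2_iff_isSquare (hα : IsPrimitiveElt α) (x : F) :
    x ∈ cycClass α 2 0 ↔ x ≠ 0 ∧ IsSquare x := by
  rw [mem_c2 hcard hα0 hord h8]
  constructor
  · rintro ⟨n, rfl, hn⟩
    refine ⟨pow_ne_zero _ hα0, ⟨α ^ (n / 2), ?_⟩⟩
    rw [← pow_add]
    congr 1
    omega
  · rintro ⟨hx0, y, rfl⟩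
    have hy0 : y ≠ 0 := by
      intro h
      rw [h, mul_zero] at hx0
      exact hx0 rfl
    obtain ⟨n, hn⟩ := hα y hy0
    exact ⟨n + n, by rw [pow_add, hn], by omega⟩

lemma c2_eq_union : cycClass α 2 0 = cycClass α 4 0 ∪ cycClass α 4 2 := by
  ext x
  rw [Finset.mem_union, mem_c2 hcard hα0 hord h8, mem_c4 hcard hα0 hord h8 (by norm_num),
    mem_c4 hcard hα0 hord h8 (by norm_num)]
  constructor
  · rintro ⟨n, rfl, hn⟩
    rcases (by omega : n % 4 = 0 ∨ n % 4 = 2) with h | h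
    · exact Or.inl ⟨n, rfl, h⟩
    · exact Or.inr ⟨n, rfl, h⟩
  · rintro (⟨n, rfl, hn⟩ | ⟨n, rfl, hn⟩) <;> exact ⟨n, rfl, by omega⟩

lemma image_mul_c4 {c : F} {a b : ℕ} (ha : a < 4) (hb : b < 4)
    (hc : c ∈ cycClass α 4 b) :
    (cycClass α 4 a).image (c * ·) = cycClass α 4 ((b + a) % 4) := by
  have hc0 : c ≠ 0 := cyc_ne_zero hα0 hc
  apply Finset.Subset.antisymm
  · intro z hz
    rw [Finset.mem_image] at hz
    obtain ⟨x, hx, rfl⟩ := hz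
    exact mul_c4 hcard hα0 hord h8 hb ha hc hx
  · intro z hz
    have h1 := inv_mem_c4 hcard hα0 hord h8 hb hc
    have h2 := mul_c4 hcard hα0 hord h8 (Nat.mod_lt _ (by norm_num) : (4-b) % 4 < 4)
      (Nat.mod_lt _ (by norm_num) : (b+a) % 4 < 4) h1 hz
    rw [show ((4 - b) % 4 + (b + a) % 4) % 4 = a by omega] at h2
    refine Finset.mem_image.2 ⟨c⁻¹ * z, h2, ?_⟩
    field_simp

lemma card_c40 : (cycClass α 4 0).card = (Fintype.card F - 1) / 4 := by
  obtain ⟨t, ht⟩ := id h8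
  have himg : cycClass α 4 0 = (Finset.range ((Fintype.card F - 1) / 4)).image
      (fun j => α ^ (4 * j)) := by
    ext x
    rw [mem_c4 hcard hα0 hord h8 (by norm_num), Finset.mem_image]
    constructor
    · rintro ⟨n, rfl, hn⟩
      set m := Fintype.card F - 1 with hm
      set n' := n % m with hn'
      have hlt : n' < m := Nat.mod_lt _ (by omega)
      have hmod : n' % 4 = 0 := by
        have h1 : n' ≡ n [MOD 4] := Nat.ModEq.of_dvd ⟨2*t, by omega⟩ (Nat.mod_modEq n m)
        rw [Nat.ModEq] at h1
        rw [h1, hn]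
      have hpow : α ^ n' = α ^ n := by
        rw [pow_eq_pow_iff_mod hα0, hord]
        exact Nat.mod_modEq n m
      refine ⟨n' / 4, Finset.mem_range.2 (by omega), ?_⟩
      rw [show 4 * (n' / 4) = n' by omega, hpow]
    · rintro ⟨j, hj, rfl⟩
      exact ⟨4 * j, rfl, by omega⟩
  rw [himg, Finset.card_image_of_injOn, Finset.card_range]
  intro j hj k hk hjk
  simp only [Finset.coe_range, Set.mem_Iio] at hj hk
  have h := (pow_eq_pow_iff_mod hα0).1 hjk
  rw [hord, Nat.ModEq] at h
  rw [Nat.mod_eq_of_lt (by omega), Nat.mod_eq_of_lt (by omega)] at h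
  omega


lemma paley_multiset (hα : IsPrimitiveElt α) (hchar2 : ringChar F ≠ 2)
    (hq8 : Fintype.card F % 8 = 1) :
    intDiff (cycClass α 2 0) = ((Fintype.card F - 5) / 4) • (cycClass α 2 0).val
      + ((Fintype.card F - 1) / 4) • (Gstar F \ cycClass α 2 0).val := by
  have hq4 : Fintype.card F % 4 = 1 := by omega
  have hq9 : 9 ≤ Fintype.card F := by omega
  ext d
  rw [Multiset.count_add, Multiset.count_nsmul, Multiset.count_nsmul,
    count_finset_val, count_finset_val, count_intDiff]
  by_cases hd : d = 0
  · subst hd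
    rw [Finset.sum_eq_zero, if_neg, if_neg]
    · simp
    · intro h
      have h2 := (Finset.mem_sdiff.1 h).1
      rw [Gstar, Finset.mem_erase] at h2
      exact h2.1 rfl
    · intro h
      exact cyc_ne_zero hα0 h rfl
    · intro x hx
      refine Finset.sum_eq_zero (fun y hy => ?_)
      rw [if_neg]
      rintro ⟨hne, h⟩
      exact hne (by linear_combination -h)
  · set S := cycClass α 2 0 with hS
    have hsum : ∑ x ∈ S, ∑ y ∈ S, (if x ≠ y ∧ d = x - y then 1 else 0)
        = (Finset.univ.filter (fun y : F =>
          (y ≠ 0 ∧ IsSquare y) ∧ (y + d ≠ 0 ∧ IsSquare (y + d)))).card := by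
      have h1 : ∀ x ∈ S, ∀ y ∈ S,
          (if x ≠ y ∧ d = x - y then (1:ℕ) else 0) = if x = d + y then 1 else 0 := by
        intro x hx y hy
        refine if_congr ?_ rfl rfl
        constructor
        · rintro ⟨-, h⟩
          linear_combination -h
        · intro h
          exact ⟨fun he => hd (by rw [he] at h; linear_combination -h),
            by linear_combination -h⟩
      rw [Finset.sum_congr rfl (fun x hx => Finset.sum_congr rfl (fun y hy => h1 x hx y hy))]
      rw [Finset.sum_comm]
      rw [Finset.sum_congr rfl (fun y (hy : y ∈ S) =>
        Finset.sum_ite_eq' S (d + y) (fun _ => (1:ℕ)))]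
      rw [← Finset.card_filter]
      congr 1
      ext y
      simp only [Finset.mem_filter, Finset.mem_univ, true_and]
      rw [hS, mem_c2_iff_isSquare hcard hα0 hord h8 hα,
        mem_c2_iff_isSquare hcard hα0 hord h8 hα, add_comm d y]
    rw [hsum]
    have hcount := paley_count hchar2 hq4 hd
    by_cases hdS : d ∈ S
    · have hsq : IsSquare d :=
        ((mem_c2_iff_isSquare hcard hα0 hord h8 hα d).1 hdS).2
      have hχ : quadraticChar F d = 1 := (quadraticChar_one_iff_isSquare hd).2 hsq
      rw [hχ] at hcount
      have h45 : 4 * (Finset.univ.filter (fun y : F =>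
          (y ≠ 0 ∧ IsSquare y) ∧ (y + d ≠ 0 ∧ IsSquare (y + d)))).card = Fintype.card F - 5 := by
        have hcast : ((Fintype.card F - 5 : ℕ) : ℤ) = (Fintype.card F : ℤ) - 5 :=
          Nat.cast_sub (by omega)
        have : ((4 * (Finset.univ.filter (fun y : F =>
            (y ≠ 0 ∧ IsSquare y) ∧ (y + d ≠ 0 ∧ IsSquare (y + d)))).card : ℕ) : ℤ)
            = ((Fintype.card F - 5 : ℕ) : ℤ) := by
          rw [hcast]
          push_cast
          linarith [hcount]
        exact_mod_cast this
      rw [if_pos hdS, if_neg (fun h => (Finset.mem_sdiff.1 h).2 hdS)]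
      omega
    · have hnsq : ¬ IsSquare d :=
        fun h => hdS ((mem_c2_iff_isSquare hcard hα0 hord h8 hα d).2 ⟨hd, h⟩)
      have hχ : quadraticChar F d = -1 := quadraticChar_neg_one_iff_not_isSquare.2 hnsq
      rw [hχ] at hcount
      have h41 : 4 * (Finset.univ.filter (fun y : F =>
          (y ≠ 0 ∧ IsSquare y) ∧ (y + d ≠ 0 ∧ IsSquare (y + d)))).card = Fintype.card F - 1 := by
        have hcast : ((Fintype.card F - 1 : ℕ) : ℤ) = (Fintype.card F : ℤ) - 1 :=
          Nat.cast_sub (by omega)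
        have : ((4 * (Finset.univ.filter (fun y : F =>
            (y ≠ 0 ∧ IsSquare y) ∧ (y + d ≠ 0 ∧ IsSquare (y + d)))).card : ℕ) : ℤ)
            = ((Fintype.card F - 1 : ℕ) : ℤ) := by
          rw [hcast]
          push_cast
          linarith [hcount]
        exact_mod_cast this
      rw [if_neg hdS, if_pos]
      · omega
      · refine Finset.mem_sdiff.2 ⟨?_, hdS⟩
        rw [Gstar, Finset.mem_erase]
        exact ⟨hd, Finset.mem_univ d⟩

end AuxCyc

/-- The family `{D_i : i ∈ R}` where `D_i = {i, -i, γi, -γi}`, indexed by the elements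
of the finset `R`. -/
def quadFam {F : Type*} [Field F] [Fintype F] [DecidableEq F] (γ : F) (R : Finset F) :
    {x : F // x ∈ R} → Finset F :=
  fun i => {(i : F), -(i : F), γ * (i : F), -(γ * (i : F))}

/-- Let `q ≡ 1 (mod 8)` be a prime power, `γ ∈ C_2^4`, and `R ⊆ C_0^4` a
set of coset representatives for `C_0^4 / {1, -1}`.  For `i ∈ R` set
`D_i = {i, -i, γi, -γi}`.  If one of `1 - γ` and `1 + γ` lies in `C_0^4` while the
other lies in `C_2^4`, then the `D_i` are pairwise disjoint with `∪ D_i = C_0^2`, and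
`D = {D_i : i ∈ R}` is a `(q,(q-1)/8,4;3,0)`-DPDF relative to `C_0^2` (i.e.
`∑ Δ(D_i) = 3 • C_0^2`) and a `(q,(q-1)/8,4;(q-17)/4,(q-1)/4)`-EPDF relative to
`C_0^2` (a standard DPDF and EPDF partitioning `C_0^2`). -/
theorem stmt_19 {F : Type*} [Field F] [Fintype F] [DecidableEq F]
    (q : ℕ) (hq : Fintype.card F = q) (hq8 : q % 8 = 1)
    (α : F) (hα : IsPrimitiveElt α)
    (γ : F) (hγ : γ ∈ cycClass α 4 2)
    (R : Finset F) (hR : R ⊆ cycClass α 4 0)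
    (hrep : ∀ x ∈ cycClass α 4 0, ∃! r, r ∈ R ∧ (x = r ∨ x = -r))
    (hγpm : (1 - γ ∈ cycClass α 4 0 ∧ 1 + γ ∈ cycClass α 4 2) ∨
      (1 - γ ∈ cycClass α 4 2 ∧ 1 + γ ∈ cycClass α 4 0)) :
    (Pairwise (fun i j : {x : F // x ∈ R} =>
      Disjoint (quadFam γ R i) (quadFam γ R j))) ∧
    Finset.univ.biUnion (quadFam γ R) = cycClass α 2 0 ∧
    IsDPDF (quadFam γ R) q ((q - 1) / 8) (fun _ => 4) (cycClass α 2 0) 3 0 ∧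
    (∃ lam : ℕ, 4 * (lam : ℤ) = (q : ℤ) - 17 ∧
      IsEPDF (quadFam γ R) q ((q - 1) / 8) (fun _ => 4) (cycClass α 2 0)
        lam ((q - 1) / 4)) := by
  classical
  subst hq
  have hq8' : Fintype.card F % 8 = 1 := hq8
  have hcard : 1 < Fintype.card F := Fintype.one_lt_card
  have hq9 : 9 ≤ Fintype.card F := by omega
  have h8 : 8 ∣ Fintype.card F - 1 := by omega
  -- α is nonzero
  have hα0 : α ≠ 0 := by
    intro h0
    have hsub : (Finset.univ : Finset F) ⊆ {0, 1} := by
      intro x _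
      by_cases hx : x = 0
      · simp [hx]
      · obtain ⟨n, hn⟩ := hα x hx
        rcases Nat.eq_zero_or_pos n with rfl | hn0
        · simp [← hn]
        · rw [h0, zero_pow (by omega)] at hn
          exact absurd hn.symm hx
    have := Finset.card_le_card hsub
    have h2 : ({0, 1} : Finset F).card ≤ 2 := Finset.card_insert_le _ _ |>.trans (by simp)
    rw [Finset.card_univ] at this
    omega
  have hord : orderOf α = Fintype.card F - 1 := prim_orderOf hcard hα0 hα
  have hchar2 : ringChar F ≠ 2 := by
    intro h
    have := FiniteField.even_card_of_char_two h
    omega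
  have h2ne : (2 : F) ≠ 0 := by
    intro h
    have h2 : ringChar F ∣ 2 := (CharP.cast_eq_zero_iff F (ringChar F) 2).1 h
    have h1 : ringChar F ≠ 1 := CharP.ringChar_ne_one
    rcases (Nat.dvd_prime Nat.prime_two).1 h2 with h' | h'
    · exact h1 h'
    · exact hchar2 h'
  have hγ0 : γ ≠ 0 := cyc_ne_zero hα0 hγ
  have h1m : (1 : F) ∈ cycClass α 4 0 := one_mem_c40 hcard hα0 hord h8
  have hm1 : (-1 : F) ∈ cycClass α 4 0 := neg_one_mem_c40 hcard hα0 hord h8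
  have hγ1 : γ ≠ 1 := fun h => disj_c4 hcard hα0 hord h8 h1m (h ▸ hγ)
  have hγm1 : γ ≠ -1 := fun h => disj_c4 hcard hα0 hord h8 hm1 (h ▸ hγ)
  have hx2 : ∀ x : F, x ≠ 0 → x ≠ -x := by
    intro x hx h
    have h2 : (2 : F) * x = 0 := by linear_combination h
    rcases mul_eq_zero.1 h2 with h' | h'
    · exact h2ne h'
    · exact hx h'
  have hγmul : ∀ x ∈ cycClass α 4 0, γ * x ∈ cycClass α 4 2 := by
    intro x hx
    have := mul_c4 hcard hα0 hord h8 (by norm_num : (2:ℕ) < 4) (by norm_num : (0:ℕ) < 4) hγ hx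
    simpa using this
  have hneg0 : ∀ x ∈ cycClass α 4 0, -x ∈ cycClass α 4 0 :=
    fun x hx => neg_mem_c4 hcard hα0 hord h8 (by norm_num) hx
  have hneg2 : ∀ x ∈ cycClass α 4 2, -x ∈ cycClass α 4 2 :=
    fun x hx => neg_mem_c4 hcard hα0 hord h8 (by norm_num) hx
  have hclash : ∀ x y : F, x ∈ cycClass α 4 0 → y ∈ cycClass α 4 2 → x ≠ y := by
    intro x y hx hy h
    exact disj_c4 hcard hα0 hord h8 hx (h ▸ hy)
  -- uniqueness of representatives
  have hpm : ∀ i j : {x : F // x ∈ R}, i ≠ j → (i : F) ≠ -(j : F) := by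
    intro i j hij h
    obtain ⟨t, -, hu⟩ := hrep (i : F) (hR i.2)
    have h1 : (i : F) = t := hu (i : F) ⟨i.2, Or.inl rfl⟩
    have h2 : (j : F) = t := hu (j : F) ⟨j.2, Or.inr h⟩
    exact hij (Subtype.ext (h1.trans h2.symm))
  have hr0 : ∀ i : {x : F // x ∈ R}, (i : F) ≠ 0 := fun i => cyc_ne_zero hα0 (hR i.2)
  -- distinctness of quadFam elements
  have hd1 : ∀ i : {x : F // x ∈ R}, (i : F) ≠ -(i : F) := fun i => hx2 _ (hr0 i)
  have hd2 : ∀ i : {x : F // x ∈ R}, (i : F) ≠ γ * (i : F) := by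
    intro i h
    have h0 : (1 - γ) * (i : F) = 0 := by linear_combination h
    rcases mul_eq_zero.1 h0 with h' | h'
    · exact hγ1 (by linear_combination -h')
    · exact hr0 i h'
  have hd3 : ∀ i : {x : F // x ∈ R}, (i : F) ≠ -(γ * (i : F)) := by
    intro i h
    have h0 : (1 + γ) * (i : F) = 0 := by linear_combination h
    rcases mul_eq_zero.1 h0 with h' | h'
    · exact hγm1 (by linear_combination h')
    · exact hr0 i h'
  have hd4 : ∀ i : {x : F // x ∈ R}, -(i : F) ≠ γ * (i : F) := by
    intro i h
    have h0 : (1 + γ) * (i : F) = 0 := by linear_combination -h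
    rcases mul_eq_zero.1 h0 with h' | h'
    · exact hγm1 (by linear_combination h')
    · exact hr0 i h'
  have hd5 : ∀ i : {x : F // x ∈ R}, -(i : F) ≠ -(γ * (i : F)) :=
    fun i h => hd2 i (neg_inj.1 h)
  have hd6 : ∀ i : {x : F // x ∈ R}, γ * (i : F) ≠ -(γ * (i : F)) :=
    fun i => hx2 _ (mul_ne_zero hγ0 (hr0 i))
  have hfam : ∀ i : {x : F // x ∈ R},
      quadFam γ R i = {(i : F), -(i : F), γ * (i : F), -(γ * (i : F))} := fun i => rfl
  -- pairwise disjointness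
  have hdisj : Pairwise (fun i j : {x : F // x ∈ R} =>
      Disjoint (quadFam γ R i) (quadFam γ R j)) := by
    intro i j hij
    have c1 : (i : F) ≠ (j : F) := fun h => hij (Subtype.ext h)
    have c2 : (i : F) ≠ -(j : F) := hpm i j hij
    have c3 : -(i : F) ≠ (j : F) := fun h => hpm j i hij.symm (by linear_combination -h)
    have c4 : -(i : F) ≠ -(j : F) := fun h => c1 (neg_inj.1 h)
    have c5 : γ * (i : F) ≠ γ * (j : F) := fun h => c1 (mul_left_cancel₀ hγ0 h)
    have c6 : γ * (i : F) ≠ -(γ * (j : F)) :=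
      fun h => c2 (mul_left_cancel₀ hγ0 (h.trans (mul_neg γ (j : F)).symm))
    have c7 : -(γ * (i : F)) ≠ γ * (j : F) := fun h => c6 (by linear_combination -h)
    have c8 : -(γ * (i : F)) ≠ -(γ * (j : F)) := fun h => c5 (neg_inj.1 h)
    have d1 : (i : F) ≠ γ * (j : F) := hclash _ _ (hR i.2) (hγmul _ (hR j.2))
    have d2 : (i : F) ≠ -(γ * (j : F)) :=
      hclash _ _ (hR i.2) (hneg2 _ (hγmul _ (hR j.2)))
    have d3 : -(i : F) ≠ γ * (j : F) := hclash _ _ (hneg0 _ (hR i.2)) (hγmul _ (hR j.2))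
    have d4 : -(i : F) ≠ -(γ * (j : F)) :=
      hclash _ _ (hneg0 _ (hR i.2)) (hneg2 _ (hγmul _ (hR j.2)))
    have d5 : γ * (i : F) ≠ (j : F) := (hclash _ _ (hR j.2) (hγmul _ (hR i.2))).symm
    have d6 : γ * (i : F) ≠ -(j : F) := (hclash _ _ (hneg0 _ (hR j.2)) (hγmul _ (hR i.2))).symm
    have d7 : -(γ * (i : F)) ≠ (j : F) :=
      (hclash _ _ (hR j.2) (hneg2 _ (hγmul _ (hR i.2)))).symm
    have d8 : -(γ * (i : F)) ≠ -(j : F) :=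
      (hclash _ _ (hneg0 _ (hR j.2)) (hneg2 _ (hγmul _ (hR i.2)))).symm
    rw [Finset.disjoint_left]
    intro t hti htj
    rw [hfam, Finset.mem_insert, Finset.mem_insert, Finset.mem_insert,
      Finset.mem_singleton] at hti htj
    rcases hti with rfl | rfl | rfl | rfl <;> rcases htj with h | h | h | h <;>
      first
      | exact c1 h | exact c2 h | exact c3 h | exact c4 h
      | exact c5 h | exact c6 h | exact c7 h | exact c8 h
      | exact d1 h | exact d2 h | exact d3 h | exact d4 h
      | exact d5 h | exact d6 h | exact d7 h | exact d8 h
  -- zero not in the family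
  have h0fam : ∀ i : {x : F // x ∈ R}, (0 : F) ∉ quadFam γ R i := by
    intro i h
    rw [hfam, Finset.mem_insert, Finset.mem_insert, Finset.mem_insert,
      Finset.mem_singleton] at h
    rcases h with h | h | h | h
    · exact hr0 i h.symm
    · exact hr0 i (neg_eq_zero.1 h.symm)
    · exact mul_ne_zero hγ0 (hr0 i) h.symm
    · exact mul_ne_zero hγ0 (hr0 i) (neg_eq_zero.1 h.symm)
  -- cards
  have hcard4 : ∀ i : {x : F // x ∈ R}, (quadFam γ R i).card = 4 := by
    intro i
    rw [hfam]
    rw [Finset.card_insert_of_notMem (by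
        simp only [Finset.mem_insert, Finset.mem_singleton]
        push_neg
        exact ⟨hd1 i, hd2 i, hd3 i⟩),
      Finset.card_insert_of_notMem (by
        simp only [Finset.mem_insert, Finset.mem_singleton]
        push_neg
        exact ⟨hd4 i, hd5 i⟩),
      Finset.card_insert_of_notMem (by
        simp only [Finset.mem_singleton]
        exact hd6 i),
      Finset.card_singleton]
  -- union is the set of nonzero squares
  have hunion : Finset.univ.biUnion (quadFam γ R) = cycClass α 2 0 := by
    apply Finset.Subset.antisymm
    · intro t ht
      rw [Finset.mem_biUnion] at ht
      obtain ⟨i, -, hti⟩ := ht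
      rw [c2_eq_union hcard hα0 hord h8, Finset.mem_union]
      rw [hfam, Finset.mem_insert, Finset.mem_insert, Finset.mem_insert,
        Finset.mem_singleton] at hti
      rcases hti with rfl | rfl | rfl | rfl
      · exact Or.inl (hR i.2)
      · exact Or.inl (hneg0 _ (hR i.2))
      · exact Or.inr (hγmul _ (hR i.2))
      · exact Or.inr (hneg2 _ (hγmul _ (hR i.2)))
    · intro t ht
      rw [c2_eq_union hcard hα0 hord h8, Finset.mem_union] at ht
      rcases ht with ht | ht
      · obtain ⟨r₀, ⟨hr₀R, hx0⟩, -⟩ := hrep t ht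
        refine Finset.mem_biUnion.2 ⟨⟨r₀, hr₀R⟩, Finset.mem_univ _, ?_⟩
        rw [hfam, Finset.mem_insert, Finset.mem_insert, Finset.mem_insert,
          Finset.mem_singleton]
        rcases hx0 with rfl | h
        · exact Or.inl rfl
        · exact Or.inr (Or.inl h)
      · have hγinv : γ⁻¹ ∈ cycClass α 4 2 := by
          have := inv_mem_c4 hcard hα0 hord h8 (by norm_num : (2:ℕ) < 4) hγ
          simpa using this
        have h1 : γ⁻¹ * t ∈ cycClass α 4 0 := by
          have := mul_c4 hcard hα0 hord h8 (by norm_num : (2:ℕ) < 4)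
            (by norm_num : (2:ℕ) < 4) hγinv ht
          simpa using this
        obtain ⟨r₀, ⟨hr₀R, hx0⟩, -⟩ := hrep (γ⁻¹ * t) h1
        refine Finset.mem_biUnion.2 ⟨⟨r₀, hr₀R⟩, Finset.mem_univ _, ?_⟩
        rw [hfam, Finset.mem_insert, Finset.mem_insert, Finset.mem_insert,
          Finset.mem_singleton]
        rcases hx0 with h | h
        · refine Or.inr (Or.inr (Or.inl ?_))
          show t = γ * r₀
          rw [← h, mul_inv_cancel_left₀ hγ0]
        · refine Or.inr (Or.inr (Or.inr ?_))
          show t = -(γ * r₀)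
          rw [← mul_neg, ← h, mul_inv_cancel_left₀ hγ0]
  -- key partition sum
  have hK1 : ∑ i : {x : F // x ∈ R}, ({(i : F), -(i : F)} : Multiset F)
      = (cycClass α 4 0).val := by
    ext x
    rw [Multiset.count_sum', count_finset_val]
    by_cases hx : x ∈ cycClass α 4 0
    · rw [if_pos hx]
      obtain ⟨r₀, ⟨hr₀R, hx0⟩, hu⟩ := hrep x hx
      have hr00 : r₀ ≠ 0 := cyc_ne_zero hα0 (hR hr₀R)
      rw [Finset.sum_eq_single_of_mem (⟨r₀, hr₀R⟩ : {x : F // x ∈ R}) (Finset.mem_univ _)]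
      · rcases hx0 with rfl | rfl
        · simp [Multiset.insert_eq_cons, Multiset.count_cons, Multiset.count_singleton,
            hx2 _ hr00]
        · simp [Multiset.insert_eq_cons, Multiset.count_cons, Multiset.count_singleton,
            (hx2 _ hr00).symm, neg_eq_zero, hr00]
      · intro b _ hb
        have hb1 : x ≠ (b : F) := by
          intro h
          exact hb (Subtype.ext (hu (b : F) ⟨b.2, Or.inl h⟩))
        have hb2 : x ≠ -(b : F) := by
          intro h
          exact hb (Subtype.ext (hu (b : F) ⟨b.2, Or.inr h⟩))
        simp [Multiset.insert_eq_cons, Multiset.count_cons, Multiset.count_singleton,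
          hb1, hb2]
    · rw [if_neg hx]
      refine Finset.sum_eq_zero fun b _ => ?_
      have hb1 : x ≠ (b : F) := fun h => hx (h ▸ hR b.2)
      have hb2 : x ≠ -(b : F) := fun h => hx (h ▸ hneg0 _ (hR b.2))
      simp [Multiset.insert_eq_cons, Multiset.count_cons, Multiset.count_singleton, hb1, hb2]
  -- scaled partition sums
  have hscale : ∀ c : F, ∀ b : ℕ, b < 4 → c ∈ cycClass α 4 b →
      ∑ i : {x : F // x ∈ R}, ({c * (i : F), -(c * (i : F))} : Multiset F)
        = (cycClass α 4 b).val := by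
    intro c b hb hcb
    have hc0 : c ≠ 0 := cyc_ne_zero hα0 hcb
    have hmap : ∑ i : {x : F // x ∈ R}, ({c * (i : F), -(c * (i : F))} : Multiset F)
        = Multiset.map (c * ·) (cycClass α 4 0).val := by
      rw [← hK1, multiset_map_sum]
      refine Finset.sum_congr rfl fun i _ => ?_
      simp [Multiset.insert_eq_cons, mul_neg]
    rw [hmap, ← Finset.image_val_of_injOn ((mul_right_injective₀ hc0).injOn),
      image_mul_c4 hcard hα0 hord h8 (by norm_num) hb hcb,
      show (b + 0) % 4 = b by omega]
  -- disjointness of the two quartic classes, and S decomposition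
  have hdisj42 : Disjoint (cycClass α 4 0) (cycClass α 4 2) := by
    rw [Finset.disjoint_left]
    intro x hx hx2'
    exact disj_c4 hcard hα0 hord h8 hx hx2'
  have hSval : (cycClass α 2 0).val = (cycClass α 4 0).val + (cycClass α 4 2).val := by
    rw [c2_eq_union hcard hα0 hord h8, ← Finset.disjUnion_eq_union _ _ hdisj42]
    rfl
  -- per-element internal differences
  have hper : ∀ i : {x : F // x ∈ R}, intDiff (quadFam γ R i) =
      (({(2:F) * (i : F), -((2:F) * (i : F))} + {(2*γ) * (i : F), -((2*γ) * (i : F))} +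
       (({(1-γ) * (i : F), -((1-γ) * (i : F))} + {(1+γ) * (i : F), -((1+γ) * (i : F))}) +
        ({(1-γ) * (i : F), -((1-γ) * (i : F))} + {(1+γ) * (i : F), -((1+γ) * (i : F))}))) :
        Multiset F) := by
    intro i
    rw [hfam, intDiff_quad (hd1 i) (hd2 i) (hd3 i) (hd4 i) (hd5 i) (hd6 i)]
    simp only [Multiset.insert_eq_cons, Multiset.cons_add, Multiset.singleton_add]
    repeat' first
    | rfl
    | (congr 1
       case _ => ring)
  -- classes of the four coefficients
  have h2sq : (2 : F) ∈ cycClass α 2 0 :=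
    (mem_c2_iff_isSquare hcard hα0 hord h8 hα (2 : F)).2
      ⟨h2ne, FiniteField.isSquare_two_iff.2 (by omega)⟩
  have h2cases : ((2:F) ∈ cycClass α 4 0 ∧ (2*γ : F) ∈ cycClass α 4 2) ∨
      ((2:F) ∈ cycClass α 4 2 ∧ (2*γ : F) ∈ cycClass α 4 0) := by
    rw [c2_eq_union hcard hα0 hord h8, Finset.mem_union] at h2sq
    rcases h2sq with h | h
    · left
      refine ⟨h, ?_⟩
      have := mul_c4 hcard hα0 hord h8 (by norm_num : (0:ℕ) < 4)
        (by norm_num : (2:ℕ) < 4) h hγ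
      simpa using this
    · right
      refine ⟨h, ?_⟩
      have := mul_c4 hcard hα0 hord h8 (by norm_num : (2:ℕ) < 4)
        (by norm_num : (2:ℕ) < 4) h hγ
      simpa using this
  have hA : ∑ i : {x : F // x ∈ R}, ({(2:F) * (i : F), -((2:F) * (i : F))} : Multiset F)
      + ∑ i : {x : F // x ∈ R}, ({(2*γ) * (i : F), -((2*γ) * (i : F))} : Multiset F)
      = (cycClass α 2 0).val := by
    rw [hSval]
    rcases h2cases with ⟨ha, hb⟩ | ⟨ha, hb⟩
    · rw [hscale _ 0 (by norm_num) ha, hscale _ 2 (by norm_num) hb]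
    · rw [hscale _ 2 (by norm_num) ha, hscale _ 0 (by norm_num) hb]
      exact add_comm _ _
  have hB : ∑ i : {x : F // x ∈ R}, ({(1-γ) * (i : F), -((1-γ) * (i : F))} : Multiset F)
      + ∑ i : {x : F // x ∈ R}, ({(1+γ) * (i : F), -((1+γ) * (i : F))} : Multiset F)
      = (cycClass α 2 0).val := by
    rw [hSval]
    rcases hγpm with ⟨ha, hb⟩ | ⟨ha, hb⟩
    · rw [hscale _ 0 (by norm_num) ha, hscale _ 2 (by norm_num) hb]
    · rw [hscale _ 2 (by norm_num) ha, hscale _ 0 (by norm_num) hb]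
      exact add_comm _ _
  -- internal difference sum
  have hsumA : ∑ i : {x : F // x ∈ R}, intDiff (quadFam γ R i)
      = 3 • (cycClass α 2 0).val := by
    rw [Finset.sum_congr rfl fun i _ => hper i]
    simp only [Finset.sum_add_distrib]
    rw [hA, hB, succ_nsmul, two_nsmul]
    abel
  -- cardinality of the index set
  have hcardR : Fintype.card {x : F // x ∈ R} = (Fintype.card F - 1) / 8 := by
    have hc1 := congrArg Multiset.card hK1
    have hcsum : Multiset.card (∑ i : {x : F // x ∈ R}, ({(i : F), -(i : F)} : Multiset F))
        = ∑ i : {x : F // x ∈ R}, Multiset.card ({(i : F), -(i : F)} : Multiset F) := by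
      simp
    rw [hcsum] at hc1
    have hc2 : ∀ i : {x : F // x ∈ R},
        Multiset.card ({(i : F), -(i : F)} : Multiset F) = 2 := fun i => rfl
    rw [Finset.sum_congr rfl fun i _ => hc2 i, Finset.sum_const, smul_eq_mul, mul_comm] at hc1
    have hc3 : (cycClass α 4 0).card = (Fintype.card F - 1) / 4 :=
      card_c40 hcard hα0 hord h8
    have hc4 : Multiset.card (cycClass α 4 0).val = (cycClass α 4 0).card := rfl
    rw [hc4, hc3, Finset.card_univ, Fintype.card_coe] at hc1
    rw [Fintype.card_coe]
    omega
  -- main DPDF structure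
  have hDPDF : IsDPDF (quadFam γ R) (Fintype.card F) ((Fintype.card F - 1) / 8)
      (fun _ => 4) (cycClass α 2 0) 3 0 := by
    refine ⟨rfl, hcardR, h0fam, hcard4, hdisj, ?_⟩
    rw [hsumA, zero_smul, add_zero]
  -- exclude q = 9
  have hq17 : 17 ≤ Fintype.card F := by
    by_contra hlt
    have h9 : Fintype.card F = 9 := by omega
    have hsq1 : ∀ x ∈ cycClass α 4 0, x = 1 ∨ x = -1 := by
      intro x hx
      rw [mem_c4 hcard hα0 hord h8 (by norm_num)] at hx
      obtain ⟨n, rfl, hn⟩ := hx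
      have hone : α ^ n * α ^ n = 1 := by
        rw [← pow_add, show α ^ (n + n) = α ^ 0 from ?_, pow_zero]
        rw [pow_eq_pow_iff_mod hα0, hord, h9]
        show (n + n) % 8 = 0 % 8
        omega
      exact mul_self_eq_one_iff.1 hone
    have h9F : ((9 : ℕ) : F) = 0 := by
      rw [← h9]
      exact FiniteField.cast_card_eq_zero F
    have h3 : (3 : F) = 0 := by
      have h33 : (3 : F) * 3 = 0 := by push_cast at h9F; linear_combination h9F
      rcases mul_eq_zero.1 h33 with h | h <;> exact h
    rcases hγpm with ⟨h1, h2⟩ | ⟨h1, h2⟩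
    · rcases hsq1 _ h1 with h | h
      · exact hγ0 (by linear_combination -h)
      · exact cyc_ne_zero hα0 h2 (by linear_combination -h + h3)
    · rcases hsq1 _ h2 with h | h
      · exact hγ0 (by linear_combination h)
      · exact cyc_ne_zero hα0 h1 (by linear_combination -h + h3)
  -- the EPDF part
  have hbi := intDiff_biUnion (quadFam γ R) hdisj
  rw [hunion, hsumA,
    paley_multiset hcard hα0 hord h8 hα hchar2 hq8'] at hbi
  have hlamval : (Fintype.card F - 5) / 4 = 3 + (Fintype.card F - 17) / 4 := by omega
  rw [hlamval, add_nsmul] at hbi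
  have hext : ∑ i : {x : F // x ∈ R}, ∑ j ∈ Finset.univ.erase i,
      extDiff (quadFam γ R i) (quadFam γ R j)
      = ((Fintype.card F - 17) / 4) • (cycClass α 2 0).val
        + ((Fintype.card F - 1) / 4) • (Gstar F \ cycClass α 2 0).val := by
    have hre : 3 • (cycClass α 2 0).val +
        (((Fintype.card F - 17) / 4) • (cycClass α 2 0).val
          + ((Fintype.card F - 1) / 4) • (Gstar F \ cycClass α 2 0).val)
        = 3 • (cycClass α 2 0).val + ∑ i : {x : F // x ∈ R}, ∑ j ∈ Finset.univ.erase i,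
            extDiff (quadFam γ R i) (quadFam γ R j) := by
      rw [← hbi]
      abel
    exact (add_left_cancel hre).symm
  refine ⟨hdisj, hunion, hDPDF, (Fintype.card F - 17) / 4, ?_, ?_⟩
  · have : ((Fintype.card F - 17 : ℕ) : ℤ) = (Fintype.card F : ℤ) - 17 :=
      Nat.cast_sub (by omega)
    rw [show (4 : ℤ) * ((Fintype.card F - 17) / 4 : ℕ) = (((4 * ((Fintype.card F - 17) / 4) : ℕ)) : ℤ) by push_cast; ring]
    rw [show (4 * ((Fintype.card F - 17) / 4) : ℕ) = Fintype.card F - 17 by omega]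
    rw [this]
  · exact ⟨rfl, hcardR, h0fam, hcard4, hdisj, hext⟩
end
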